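/- Let a finite group (G,Σ̃) act on a difference ring (A,Σ) with ΣG = Σ and A an integral domain, and let B = A^G. If σ₁,σ₂ ∈ Σ restrict to the same endomorphism of B, then there exists g ∈ G with σ₂ = σ₁∘g. Hence Σ̄ = Σ/G. -/

import Mathlib

open Polynomial

section AuxLemmas

/-- Left-multiplication reindexing of a product over a finite subgroup. -/
lemma subgroup_prod_mul_left {M β : Type*} [Group M] [CommMonoid β] (H : Subgroup M)
    (hf : (H : Set M).Finite) {h : M} (hh : h ∈ H) (f : M → β) :
    ∏ g ∈ hf.toFinset, f (h * g) = ∏ g ∈ hf.toFinset, f g := by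
  refine Finset.prod_nbij' (fun g => h * g) (fun g => h⁻¹ * g) ?_ ?_ ?_ ?_ ?_ <;>
    intro a ha <;>
    simp_all [Set.Finite.mem_toFinset, mul_mem, inv_mem, mul_assoc]

variable {A : Type*} [CommRing A] [IsDomain A]

/-- Lift of an injective ring endomorphism of `A` to its fraction field. -/
noncomputable def liftK (σ : A →+* A) (h : Function.Injective σ) :
    FractionRing A →+* FractionRing A :=
  IsFractionRing.lift (g := (algebraMap A (FractionRing A)).comp σ)
    ((IsFractionRing.injective A (FractionRing A)).comp h)

lemma liftK_algebraMap (σ : A →+* A) (h : Function.Injective σ) (a : A) :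
    liftK σ h (algebraMap A (FractionRing A) a) = algebraMap A (FractionRing A) (σ a) :=
  IsFractionRing.lift_algebraMap _ _

lemma liftK_ext {f g : FractionRing A →+* FractionRing A}
    (h : ∀ a : A, f (algebraMap A (FractionRing A) a) = g (algebraMap A (FractionRing A) a)) :
    f = g :=
  IsLocalization.ringHom_ext (nonZeroDivisors A) (RingHom.ext h)

/-- Lift of a ring automorphism of `A` to its fraction field. -/
noncomputable def liftKE (e : A ≃+* A) : FractionRing A ≃+* FractionRing A :=
  RingEquiv.ofRingHom (liftK (e : A →+* A) e.injective)
    (liftK (e.symm : A →+* A) e.symm.injective)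
    (by
      refine liftK_ext fun a => ?_
      rw [RingHom.comp_apply, RingHom.id_apply]
      exact (congrArg _ (liftK_algebraMap (e.symm : A →+* A) e.symm.injective a)).trans
        ((liftK_algebraMap (e : A →+* A) e.injective _).trans (by simp)))
    (by
      refine liftK_ext fun a => ?_
      rw [RingHom.comp_apply, RingHom.id_apply]
      exact (congrArg _ (liftK_algebraMap (e : A →+* A) e.injective a)).trans
        ((liftK_algebraMap (e.symm : A →+* A) e.symm.injective _).trans (by simp)))

lemma liftKE_algebraMap (e : A ≃+* A) (a : A) :
    liftKE e (algebraMap A (FractionRing A) a) = algebraMap A (FractionRing A) (e a) :=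
  liftK_algebraMap (e : A →+* A) (fun _ _ h => e.injective h) a

/-- The lift, as a monoid homomorphism on automorphism groups. -/
noncomputable def liftKM : (A ≃+* A) →* (FractionRing A ≃+* FractionRing A) where
  toFun := liftKE
  map_one' := by
    have : ((liftKE (1 : A ≃+* A)) : FractionRing A →+* FractionRing A)
        = ((1 : FractionRing A ≃+* FractionRing A) : FractionRing A →+* FractionRing A) :=
      liftK_ext fun a => by
        show liftKE (1 : A ≃+* A) _ = _
        rw [liftKE_algebraMap]
        rfl
    exact RingEquiv.ext fun x => RingHom.congr_fun this x
  map_mul' e₁ e₂ := by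
    have : ((liftKE (e₁ * e₂)) : FractionRing A →+* FractionRing A)
        = ((liftKE e₁ * liftKE e₂ : FractionRing A ≃+* FractionRing A) :
            FractionRing A →+* FractionRing A) :=
      liftK_ext fun a => by
        show liftKE (e₁ * e₂) _ = liftKE e₁ (liftKE e₂ _)
        rw [liftKE_algebraMap, liftKE_algebraMap, liftKE_algebraMap]
        rfl
    exact RingEquiv.ext fun x => RingHom.congr_fun this x

end AuxLemmas

/-- The subring of invariants `A^G` of a group of ring automorphisms. -/
def fixedSubring {A : Type*} [CommRing A] (G : Subgroup (A ≃+* A)) : Subring A where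
  carrier := {x | ∀ g ∈ G, g x = x}
  zero_mem' := by intro g hg; simp
  one_mem' := by intro g hg; simp
  add_mem' := by
    intro a b ha hb g hg
    simp only [Set.mem_setOf_eq] at ha hb
    rw [map_add, ha g hg, hb g hg]
  mul_mem' := by
    intro a b ha hb g hg
    simp only [Set.mem_setOf_eq] at ha hb
    rw [map_mul, ha g hg, hb g hg]
  neg_mem' := by
    intro a ha g hg
    simp only [Set.mem_setOf_eq] at ha
    rw [map_neg, ha g hg]

/-- if `G` acts compatibly on a difference ring `(A, Σ)` with `A` an
integral domain and `B = A^G`, then two elements of `Σ` restricting to the same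
endomorphism of `B` differ by an element of `G`; hence `Σ̄ = Σ/G`. -/
theorem strMap_agree_iff_differ_by_G
    {A : Type*} [CommRing A] [IsDomain A] (G : Subgroup (A ≃+* A))
    (hGfin : (G : Set (A ≃+* A)).Finite)
    (Sg : Set (A →+* A))
    (hinj : ∀ σ ∈ Sg, Function.Injective σ)
    (hconj : ∀ σ ∈ Sg, ∀ τ ∈ Sg, ∃ ρ ∈ Sg, (τ : A →+* A).comp ρ = σ.comp τ)
    (hcompat : ∀ g ∈ G, ∀ σ ∈ Sg, ∃ g' ∈ G,
      ((g : A ≃+* A) : A →+* A).comp σ = σ.comp ((g' : A ≃+* A) : A →+* A))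
    (hSgG : ∀ g ∈ G, ∀ σ ∈ Sg, (((g : A ≃+* A) : A →+* A)).comp σ ∈ Sg)
    (σ₁ σ₂ : A →+* A) (h₁ : σ₁ ∈ Sg) (h₂ : σ₂ ∈ Sg)
    (hagree : ∀ b ∈ fixedSubring G, σ₁ b = σ₂ b) :
    ∃ g ∈ G, σ₂ = σ₁.comp ((g : A ≃+* A) : A →+* A) := by
  classical
  set K := FractionRing A with hK
  set σ₁K := liftK σ₁ (hinj σ₁ h₁) with hσ₁K
  set σ₂K := liftK σ₂ (hinj σ₂ h₂) with hσ₂K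
  set G' : Subgroup (K ≃+* K) := G.map liftKM with hG'
  have hG'setfin : ((G' : Set (K ≃+* K))).Finite := by
    rw [hG', Subgroup.coe_map]
    exact hGfin.image _
  haveI : Finite G' := hG'setfin.to_subtype
  haveI : FaithfulSMul G' K := ⟨fun {g₁ g₂} h => Subtype.ext (RingEquiv.ext fun x => h x)⟩
  have hinjA : Function.Injective (algebraMap A K) := IsFractionRing.injective A K
  -- agreement on the fixed field of K
  have hagK : ∀ x : K, (∀ g' ∈ G', g' x = x) → σ₁K x = σ₂K x := by
    intro x hx
    obtain ⟨a, s, hs, hxdiv⟩ := IsFractionRing.div_surjective (A := A) x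
    have hs0 : s ≠ 0 := nonZeroDivisors.ne_zero hs
    set t := hGfin.toFinset with ht
    have h1t : (1 : A ≃+* A) ∈ t := by
      rw [ht, Set.Finite.mem_toFinset]; exact G.one_mem
    set q : A := ∏ g ∈ t, g s with hqdef
    have hq0 : q ≠ 0 := by
      rw [hqdef]
      refine Finset.prod_ne_zero_iff.mpr fun g hg h0 => hs0 ?_
      exact g.injective (by simpa using h0)
    have hqfix : q ∈ fixedSubring G := by
      intro h hh
      show h q = q
      rw [hqdef, map_prod]
      calc ∏ g ∈ t, h (g s) = ∏ g ∈ t, (h * g) s := by rfl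
        _ = ∏ g ∈ t, g s := subgroup_prod_mul_left G hGfin hh (fun g => g s)
    set r : A := a * ∏ g ∈ t.erase 1, g s with hrdef
    have hqsplit : q = s * ∏ g ∈ t.erase 1, g s := by
      rw [hqdef, ← Finset.mul_prod_erase t _ h1t]
      rfl
    have hsK : algebraMap A K s ≠ 0 := fun h => hs0 (hinjA (by simpa using h))
    have hxq : x * algebraMap A K q = algebraMap A K r := by
      rw [← hxdiv, hrdef, hqsplit, map_mul, map_mul]
      rw [div_mul_eq_mul_div, div_eq_iff hsK]
      ring
    have hqK : algebraMap A K q ≠ 0 := fun h => hq0 (hinjA (by simpa using h))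
    have hrfix : r ∈ fixedSubring G := by
      intro h hh
      show h r = r
      apply hinjA
      have hmem : (liftKM h : K ≃+* K) ∈ G' := by
        rw [hG']; exact Subgroup.mem_map_of_mem _ hh
      have hxh : liftKE h x = x := hx (liftKM h) hmem
      calc algebraMap A K (h r) = liftKE h (algebraMap A K r) := (liftKE_algebraMap h r).symm
        _ = liftKE h (x * algebraMap A K q) := by rw [hxq]
        _ = liftKE h x * liftKE h (algebraMap A K q) := map_mul _ _ _
        _ = x * algebraMap A K (h q) := by rw [hxh, liftKE_algebraMap]
        _ = x * algebraMap A K q := by rw [hqfix h hh]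
        _ = algebraMap A K r := hxq
    have hxrq : x = algebraMap A K r / algebraMap A K q := by
      rw [← hxq, mul_div_cancel_right₀ _ hqK]
    rw [hxrq, map_div₀, map_div₀, hσ₁K, hσ₂K, liftK_algebraMap, liftK_algebraMap,
      liftK_algebraMap, liftK_algebraMap, hagree r hrfix, hagree q hqfix]
  -- pointwise statement in K
  have stepA : ∀ x : K, ∃ g' ∈ G', σ₂K x = σ₁K (g' x) := by
    intro x
    set t' := hG'setfin.toFinset with ht'
    have h1t' : (1 : K ≃+* K) ∈ t' := by
      rw [ht', Set.Finite.mem_toFinset]; exact G'.one_mem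
    set P : K[X] := ∏ g ∈ t', (X - C (g x)) with hPdef
    have hPmap : ∀ f : K →+* K, P.map f = ∏ g ∈ t', (X - C (f (g x))) := by
      intro f
      rw [hPdef, Polynomial.map_prod]
      simp
    have hPfix : ∀ n : ℕ, ∀ h' ∈ G', h' (P.coeff n) = P.coeff n := by
      intro n h' hh'
      have hPm : P.map (h' : K →+* K) = P := by
        rw [hPmap]
        calc ∏ g ∈ t', (X - C (h' (g x))) = ∏ g ∈ t', (X - C ((h' * g) x)) := by rfl
          _ = ∏ g ∈ t', (X - C (g x)) :=
              subgroup_prod_mul_left G' hG'setfin hh' (fun g => X - C (g x))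
          _ = P := hPdef.symm
      calc h' (P.coeff n) = (P.map (h' : K →+* K)).coeff n :=
            (Polynomial.coeff_map (h' : K →+* K) n).symm
        _ = P.coeff n := by rw [hPm]
    have hmapeq : P.map σ₁K = P.map σ₂K :=
      Polynomial.ext fun n => by
        rw [Polynomial.coeff_map, Polynomial.coeff_map]
        exact hagK (P.coeff n) (fun g' hg' => hPfix n g' hg')
    have hPeval : P.eval x = 0 := by
      rw [hPdef, Polynomial.eval_prod]
      refine Finset.prod_eq_zero h1t' ?_
      have h1x : (1 : K ≃+* K) x = x := rfl
      simp [h1x]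
    have h0 : (P.map σ₂K).eval (σ₂K x) = 0 := by
      rw [Polynomial.eval_map, Polynomial.eval₂_at_apply, hPeval, map_zero]
    rw [← hmapeq, hPmap σ₁K, Polynomial.eval_prod] at h0
    obtain ⟨g, hg, hg0⟩ := Finset.prod_eq_zero_iff.mp h0
    refine ⟨g, ?_, ?_⟩
    · rw [ht', Set.Finite.mem_toFinset] at hg; exact hg
    · have hsub : σ₂K x - σ₁K (g x) = 0 := by simpa using hg0
      exact sub_eq_zero.mp hsub
  -- build the ring hom τ with σ₁K ∘ τ = σ₂K
  choose gf hgfmem hgfeq using stepA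
  have hσ₁Kinj : Function.Injective σ₁K := σ₁K.injective
  have hτdef : ∀ x : K, σ₁K (gf x x) = σ₂K x := fun x => (hgfeq x).symm
  let τ : K →+* K :=
    { toFun := fun x => gf x x
      map_one' := hσ₁Kinj (by rw [hτdef, map_one, map_one])
      map_mul' := fun a b => hσ₁Kinj (by rw [hτdef, map_mul, map_mul, hτdef, hτdef])
      map_zero' := hσ₁Kinj (by rw [hτdef, map_zero, map_zero])
      map_add' := fun a b => hσ₁Kinj (by rw [hτdef, map_add, map_add, hτdef, hτdef]) }
  have hτ : ∀ x : K, σ₁K (τ x) = σ₂K x := hτdef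
  have hτfix : ∀ x : K, (∀ g' ∈ G', g' x = x) → τ x = x := by
    intro x hx
    apply hσ₁Kinj
    rw [hτ, ← hagK x hx]
  let τA : K →ₐ[FixedPoints.subfield G' K] K :=
    { toRingHom := τ
      commutes' := fun r => by
        have hr : ∀ g' ∈ G', g' (r : K) = (r : K) := fun g' hg' => r.2 ⟨g', hg'⟩
        exact hτfix (r : K) hr }
  obtain ⟨g'', hg''⟩ := (FixedPoints.toAlgHom_bijective G' K).surjective τA
  obtain ⟨g, hgG, hglift⟩ := Subgroup.mem_map.mp g''.2
  refine ⟨g, hgG, ?_⟩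
  ext a
  apply hinjA
  have h1 : τ (algebraMap A K a) = (g'' : K ≃+* K) (algebraMap A K a) := by
    have := AlgHom.congr_fun hg'' (algebraMap A K a)
    exact this.symm
  calc algebraMap A K (σ₂ a) = σ₂K (algebraMap A K a) := (liftK_algebraMap _ _ _).symm
    _ = σ₁K (τ (algebraMap A K a)) := (hτ _).symm
    _ = σ₁K ((g'' : K ≃+* K) (algebraMap A K a)) := by rw [h1]
    _ = σ₁K (liftKE g (algebraMap A K a)) := by rw [← hglift]; rfl
    _ = σ₁K (algebraMap A K (g a)) := by rw [liftKE_algebraMap]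
    _ = algebraMap A K (σ₁ (g a)) := liftK_algebraMap _ _ _
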